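/- arXiv:1811.11560 — 2 statements merged into one kernel-verified Lean document; each statement's English description precedes it below -/
import Mathlib

section
/- Let $a, b$ satisfy $0 < b \le a \le 1$. Then there exists a complex polynomial $p$ such that: (1) the sum of absolute values of its coefficients equals $1$; (2) $\sup_{z \in \overline{\mathbb{D}}} |p(z)| = a$; (3) $\sup_{x \in [-1,1]} |p(x)| = b$ and $p(1) = b$. -/
open Polynomial

/-- The sum of the absolute values of the coefficients of a polynomial. -/
noncomputable def l1 (f : Polynomial ℂ) : ℝ := ∑ k ∈ f.support, ‖f.coeff k‖

lemma l1_eq_sum {f : Polynomial ℂ} {s : Finset ℕ} (h : f.support ⊆ s) :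
    l1 f = (∑ k ∈ s, ‖f.coeff k‖ : ℝ) := by
  rw [l1]
  refine Finset.sum_subset h ?_
  intro k _ hk
  simp [Polynomial.notMem_support_iff.mp hk]

lemma l1_add_disj {f g : Polynomial ℂ} (h : ∀ k, f.coeff k = 0 ∨ g.coeff k = 0) :
    l1 (f + g) = l1 f + l1 g := by
  have hsub : (f + g).support ⊆ f.support ∪ g.support := Polynomial.support_add
  rw [l1_eq_sum hsub, l1_eq_sum (Finset.subset_union_left (s₂ := g.support)),
    l1_eq_sum (Finset.subset_union_right (s₁ := f.support)), ← Finset.sum_add_distrib]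
  apply Finset.sum_congr rfl
  intro k _
  rcases h k with h0 | h0 <;> simp [h0]

lemma l1_C_mul (β : ℂ) (f : Polynomial ℂ) : l1 (C β * f) = ‖β‖ * l1 f := by
  have hsub : (C β * f).support ⊆ f.support := by
    intro k hk
    rw [Polynomial.mem_support_iff] at hk ⊢
    intro h0; exact hk (by simp [h0])
  rw [l1_eq_sum hsub, l1, Finset.mul_sum]
  apply Finset.sum_congr rfl
  intro k _
  simp [Polynomial.coeff_C_mul, norm_mul]

lemma l1_mul_X_pow (f : Polynomial ℂ) (D : ℕ) : l1 (f * X ^ D) = l1 f := by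
  have hsub : (f * X ^ D).support ⊆ f.support.image (· + D) := by
    intro k hk
    rw [Polynomial.mem_support_iff, Polynomial.coeff_mul_X_pow'] at hk
    by_cases hD : D ≤ k
    · simp only [hD, if_true] at hk
      refine Finset.mem_image.mpr ⟨k - D, Polynomial.mem_support_iff.mpr hk, ?_⟩
      omega
    · simp [hD] at hk
  rw [l1_eq_sum hsub, Finset.sum_image (by intro a _ b _ h; simp only at h; omega)]
  apply Finset.sum_congr rfl
  intro k _
  rw [Polynomial.coeff_mul_X_pow]

lemma l1_one : l1 1 = 1 := by
  rw [show (1 : Polynomial ℂ) = C 1 by simp, l1]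
  rw [Polynomial.support_C (one_ne_zero)]
  simp

lemma l1_mul_trinomial (f : Polynomial ℂ) {D : ℕ} (hD : f.natDegree < D) (α β γ : ℂ) :
    l1 (f * (C α + C β * X ^ D + C γ * X ^ (2*D))) =
      l1 f * (‖α‖ + ‖β‖ + ‖γ‖) := by
  have hexp : f * (C α + C β * X ^ D + C γ * X ^ (2*D)) =
      (C α * f + (C β * f) * X ^ D) + (C γ * f) * X ^ (2*D) := by ring
  have hz1 : ∀ k, (C α * f).coeff k = 0 ∨ ((C β * f) * X ^ D).coeff k = 0 := by
    intro k
    by_cases hk : D ≤ k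
    · left
      rw [Polynomial.coeff_C_mul, Polynomial.coeff_eq_zero_of_natDegree_lt (lt_of_lt_of_le hD hk), mul_zero]
    · right
      rw [Polynomial.coeff_mul_X_pow', if_neg hk]
  have hz2 : ∀ k, (C α * f + (C β * f) * X ^ D).coeff k = 0 ∨ ((C γ * f) * X ^ (2*D)).coeff k = 0 := by
    intro k
    by_cases hk : 2*D ≤ k
    · left
      rw [Polynomial.coeff_add, Polynomial.coeff_C_mul,
        Polynomial.coeff_eq_zero_of_natDegree_lt (lt_of_lt_of_le hD (by omega)),
        Polynomial.coeff_mul_X_pow', if_pos (by omega : D ≤ k), Polynomial.coeff_C_mul,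
        Polynomial.coeff_eq_zero_of_natDegree_lt (by omega : f.natDegree < k - D)]
      ring
    · right
      rw [Polynomial.coeff_mul_X_pow', if_neg hk]
  rw [hexp, l1_add_disj hz2, l1_add_disj hz1, l1_mul_X_pow, l1_mul_X_pow, l1_C_mul, l1_C_mul,
    l1_C_mul]
  ring

lemma keyineq (μ t : ℝ) (w : ℂ) (hμ : 0 ≤ μ) (ht : 8*μ ≤ t) (hw : ‖w‖ ≤ 1) :
    ‖((-μ : ℝ) : ℂ) + (t : ℝ) * w + ((2*μ : ℝ) : ℂ) * w^2‖ ≤ t + μ := by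
  have htμ : (0:ℝ) ≤ t + μ := by linarith
  have hs : w.re^2 + w.im^2 ≤ 1 := by
    have := Complex.sq_norm w
    rw [Complex.normSq_apply] at this
    nlinarith [norm_nonneg w]
  have h1 : ‖((-μ : ℝ) : ℂ) + (t : ℝ) * w + ((2*μ : ℝ) : ℂ) * w^2‖ ^ 2 ≤ (t + μ)^2 := by
    rw [Complex.sq_norm, Complex.normSq_apply]
    simp only [Complex.add_re, Complex.add_im, Complex.mul_re, Complex.mul_im,
      Complex.ofReal_re, Complex.ofReal_im, pow_two, Complex.mul_re, Complex.mul_im]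
    ring_nf
    nlinarith [sq_nonneg w.im, sq_nonneg w.re, sq_nonneg (w.re+1), sq_nonneg (w.re-1),
      sq_nonneg (w.re*w.im), mul_nonneg hμ (sub_nonneg.mpr ht), sq_nonneg (w.re^2+w.im^2),
      mul_nonneg (mul_nonneg hμ hμ) (sub_nonneg.mpr hs),
      mul_nonneg (mul_nonneg hμ (le_trans (by linarith) ht)) (sub_nonneg.mpr hs),
      sq_nonneg (t - 8*μ),
      mul_nonneg (mul_nonneg hμ (le_trans (by linarith) ht)) (sq_nonneg (1-w.re))]
  calc ‖_‖ = √(‖_‖ ^ 2) := (Real.sqrt_sq (norm_nonneg _)).symm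
    _ ≤ √((t+μ)^2) := Real.sqrt_le_sqrt h1
    _ = t + μ := Real.sqrt_sq htμ

noncomputable def trin (α β γ : ℂ) (D : ℕ) : Polynomial ℂ := C α + C β * X^D + C γ * X^(2*D)

lemma trin_natDegree_le (α β γ : ℂ) (D : ℕ) : (trin α β γ D).natDegree ≤ 2*D := by
  unfold trin
  refine le_trans (natDegree_add_le _ _) ?_
  simp only [max_le_iff]
  constructor
  · refine le_trans (natDegree_add_le _ _) ?_
    simp only [max_le_iff, natDegree_C]
    refine ⟨by omega, le_trans (natDegree_C_mul_le _ _) ?_⟩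
    simp [natDegree_X_pow]; omega
  · refine le_trans (natDegree_C_mul_le _ _) ?_
    simp [natDegree_X_pow]

lemma trin_eval (α β γ : ℂ) (D : ℕ) (z : ℂ) :
    (trin α β γ D).eval z = α + β * z^D + γ * (z^D)^2 := by
  simp [trin, ← pow_mul, mul_comm D 2]

lemma trin_abs_le (μ t : ℝ) (hμ : 0 ≤ μ) (ht : 8*μ ≤ t) (D : ℕ) (z : ℂ)
    (hz : ‖z‖ ≤ 1) :
    ‖(trin ((-μ : ℝ) : ℂ) ((t : ℝ) : ℂ) ((2*μ : ℝ) : ℂ) D).eval z‖ ≤ t + μ := by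
  rw [trin_eval]
  exact keyineq μ t _ hμ ht (by rw [norm_pow]; exact pow_le_one₀ (norm_nonneg z) hz)

noncomputable def pump (μ t : ℝ) (n : ℕ) : Polynomial ℂ :=
  ∏ j ∈ Finset.range n, trin ((-μ : ℝ) : ℂ) ((t : ℝ) : ℂ) ((2*μ : ℝ) : ℂ) (4*3^j)

lemma pump_natDegree (μ t : ℝ) (n : ℕ) : (pump μ t n).natDegree + 4 ≤ 4*3^n := by
  induction n with
  | zero => simp [pump]
  | succ k ih =>
    rw [pump, Finset.prod_range_succ, ← pump]
    have h1 := natDegree_mul_le (p := pump μ t k)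
      (q := trin ((-μ : ℝ) : ℂ) ((t : ℝ) : ℂ) ((2*μ : ℝ) : ℂ) (4*3^k))
    have h2 := trin_natDegree_le ((-μ : ℝ) : ℂ) ((t : ℝ) : ℂ) ((2*μ : ℝ) : ℂ) (4*3^k)
    have h3 : (4:ℕ)*3^(k+1) = 4*3^k + 2*(4*3^k) := by ring
    omega

lemma pump_l1 (μ t : ℝ) (hμ : 0 ≤ μ) (ht : 0 ≤ t) (n : ℕ) :
    l1 (pump μ t n) = (t + 3*μ)^n := by
  induction n with
  | zero => simpa [pump] using l1_one
  | succ k ih =>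
    rw [pump, Finset.prod_range_succ, ← pump, trin,
      l1_mul_trinomial _ (by have := pump_natDegree μ t k; omega) _ _ _, ih]
    rw [Complex.norm_real, Real.norm_eq_abs, Complex.norm_real, Real.norm_eq_abs, Complex.norm_real, Real.norm_eq_abs]
    rw [abs_of_nonpos (by linarith), abs_of_nonneg ht, abs_of_nonneg (by linarith)]
    ring

lemma pump_eval_one (μ t : ℝ) (n : ℕ) :
    (pump μ t n).eval 1 = (((t + μ : ℝ) : ℂ))^n := by
  rw [pump, eval_prod]
  have h : ∀ j ∈ Finset.range n, (trin ((-μ : ℝ) : ℂ) ((t : ℝ) : ℂ) ((2*μ : ℝ) : ℂ) (4*3^j)).eval 1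
      = ((t + μ : ℝ) : ℂ) := by
    intro j _
    rw [trin_eval]; push_cast; ring
  rw [Finset.prod_congr rfl h, Finset.prod_const, Finset.card_range]

lemma pump_eval_I (μ t : ℝ) (n : ℕ) :
    (pump μ t n).eval Complex.I = (((t + μ : ℝ) : ℂ))^n := by
  rw [pump, eval_prod]
  have h : ∀ j ∈ Finset.range n, (trin ((-μ : ℝ) : ℂ) ((t : ℝ) : ℂ) ((2*μ : ℝ) : ℂ) (4*3^j)).eval Complex.I
      = ((t + μ : ℝ) : ℂ) := by
    intro j _
    rw [trin_eval, pow_mul, Complex.I_pow_four, one_pow]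
    push_cast; ring
  rw [Finset.prod_congr rfl h, Finset.prod_const, Finset.card_range]

lemma pump_bound (μ t : ℝ) (hμ : 0 ≤ μ) (ht : 8*μ ≤ t) (n : ℕ) (z : ℂ)
    (hz : ‖z‖ ≤ 1) : ‖(pump μ t n).eval z‖ ≤ (t+μ)^n := by
  rw [pump, eval_prod, norm_prod]
  refine le_trans (Finset.prod_le_prod (g := fun _ => t + μ)
    (fun j _ => norm_nonneg _) (fun j _ => trin_abs_le μ t hμ ht _ z hz)) ?_
  rw [Finset.prod_const, Finset.card_range]

noncomputable def cinner (c : ℝ) (n m : ℕ) : Polynomial ℂ :=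
  (C (c : ℂ) * trin (-1) 0 1 1) * ∏ i ∈ Finset.range m, trin (-1) 0 1 (3^(n+2+i))

lemma cinner_natDegree (c : ℝ) (n m : ℕ) :
    (cinner c n m).natDegree + 3^(n+2) ≤ 3^(n+2+m) + 2 := by
  induction m with
  | zero =>
    simp only [cinner, Finset.range_zero, Finset.prod_empty, mul_one]
    have h1 := natDegree_mul_le (p := C ((c:ℝ) : ℂ)) (q := trin (-1) 0 1 1)
    have h2 := trin_natDegree_le (-1) 0 1 1
    simp only [natDegree_C] at h1
    have h0 : n+2+0 = n+2 := rfl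
    rw [h0]
    omega
  | succ k ih =>
    rw [cinner, Finset.prod_range_succ, ← mul_assoc, ← cinner]
    have h1 := natDegree_mul_le (p := cinner c n k) (q := trin (-1) 0 1 (3^(n+2+k)))
    have h2 := trin_natDegree_le (-1 : ℂ) 0 1 (3^(n+2+k))
    have h3 : (3:ℕ)^(n+2+(k+1)) = 3^(n+2+k) + 2*3^(n+2+k) := by ring
    have h4 : (3:ℕ)^(n+2) ≤ 3^(n+2+k) := Nat.pow_le_pow_right (by norm_num) (by omega)
    omega

lemma cinner_l1 (c : ℝ) (hc : 0 ≤ c) (n m : ℕ) : l1 (cinner c n m) = c * 2^(m+1) := by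
  induction m with
  | zero =>
    rw [cinner, Finset.range_zero, Finset.prod_empty, mul_one, trin,
      l1_mul_trinomial _ (by simp) _ _ _]
    have hCc : l1 (C ((c:ℝ):ℂ)) = c := by
      rw [show (C ((c:ℝ):ℂ) : Polynomial ℂ) = C ((c:ℝ):ℂ) * 1 from (mul_one _).symm, l1_C_mul,
        l1_one, Complex.norm_real, Real.norm_eq_abs, abs_of_nonneg hc, mul_one]
    rw [hCc]; norm_num
  | succ k ih =>
    rw [cinner, Finset.prod_range_succ, ← mul_assoc, ← cinner, trin,
      l1_mul_trinomial _ ?_ _ _ _, ih]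
    · simp; ring
    · have := cinner_natDegree c n k
      have h4 : (3:ℕ)^(n+2) ≥ 9 := by
        have : (3:ℕ)^(n+2) = 9 * 3^n := by ring
        have h5 : (1:ℕ) ≤ 3^n := Nat.one_le_pow _ _ (by norm_num)
        omega
      omega

lemma cinner_eval_I (c : ℝ) (n m : ℕ) (hm : Odd m) :
    (cinner c n m).eval Complex.I = ((c : ℝ) : ℂ) * 2^(m+1) := by
  rw [cinner, eval_mul, eval_mul, eval_C, eval_prod]
  have h1 : (trin (-1) 0 1 1).eval Complex.I = -2 := by
    rw [trin_eval]; simp [Complex.I_sq]; norm_num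
  have h2 : ∀ i ∈ Finset.range m, (trin (-1 : ℂ) 0 1 (3^(n+2+i))).eval Complex.I = -2 := by
    intro i _
    rw [trin_eval, ← pow_mul, mul_comm (3^(n+2+i)) 2, pow_mul, Complex.I_sq]
    rw [Odd.neg_one_pow (Odd.pow ⟨1, by norm_num⟩)]
    norm_num
  rw [Finset.prod_congr rfl h2, Finset.prod_const, Finset.card_range, h1]
  rw [Odd.neg_pow hm]
  ring

lemma cinner_eval_one (c : ℝ) (n m : ℕ) : (cinner c n m).eval 1 = 0 := by
  rw [cinner, eval_mul, eval_mul, eval_C]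
  have h1 : (trin (-1) 0 1 1).eval 1 = 0 := by rw [trin_eval]; simp
  rw [h1]; ring

lemma cinner_abs_le (c : ℝ) (hc : 0 ≤ c) (n m : ℕ) (z : ℂ) (hz : ‖z‖ ≤ 1) :
    ‖(cinner c n m).eval z‖ ≤ c * 2^(m+1) := by
  rw [cinner, eval_mul, eval_mul, eval_C, norm_mul, norm_mul, eval_prod, norm_prod,
    Complex.norm_real, Real.norm_eq_abs, abs_of_nonneg hc]
  have hz2 : ∀ D : ℕ, ‖(trin (-1 : ℂ) 0 1 D).eval z‖ ≤ 2 := by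
    intro D
    rw [trin_eval]
    calc ‖-1 + 0 * z^D + 1 * (z^D)^2‖
        ≤ ‖-1 + 0*z^D‖ + ‖1 * (z^D)^2‖ := norm_add_le _ _
      _ ≤ 1 + 1 := by
          refine add_le_add (by simp) ?_
          rw [one_mul, norm_pow, norm_pow]
          exact pow_le_one₀ (pow_nonneg (norm_nonneg z) D) (pow_le_one₀ (norm_nonneg z) hz)
      _ = 2 := by norm_num
  calc c * ‖(trin (-1) 0 1 1).eval z‖ * ∏ i ∈ Finset.range m, ‖(trin (-1 : ℂ) 0 1 (3^(n+2+i))).eval z‖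
      ≤ c * 2 * ∏ i ∈ Finset.range m, (2:ℝ) := by
        refine mul_le_mul (mul_le_mul le_rfl (hz2 1) (norm_nonneg _) hc) ?_ ?_ ?_
        · exact Finset.prod_le_prod (fun i _ => norm_nonneg _) (fun i _ => hz2 _)
        · exact Finset.prod_nonneg (fun i _ => norm_nonneg _)
        · positivity
    _ = c * 2^(m+1) := by rw [Finset.prod_const, Finset.card_range]; ring

lemma cinner_real_le (c : ℝ) (hc : 0 ≤ c) (n m : ℕ) (x : ℝ) (hx : x^2 ≤ 1) :
    ‖(cinner c n m).eval ((x : ℝ) : ℂ)‖ ≤ c * (1 - x^2) := by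
  rw [cinner, eval_mul, eval_mul, eval_C, norm_mul, norm_mul, eval_prod, norm_prod,
    Complex.norm_real, Real.norm_eq_abs, abs_of_nonneg hc]
  have h1 : ‖(trin (-1 : ℂ) 0 1 1).eval ((x:ℝ):ℂ)‖ = 1 - x^2 := by
    rw [trin_eval]
    have : (-1 : ℂ) + 0 * ((x:ℝ):ℂ)^1 + 1 * (((x:ℝ):ℂ)^1)^2 = (((x^2 - 1 : ℝ)) : ℂ) := by
      push_cast; ring
    rw [this, Complex.norm_real, Real.norm_eq_abs, abs_of_nonpos (by linarith)]
    ring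
  have h2 : ∀ i ∈ Finset.range m, ‖(trin (-1 : ℂ) 0 1 (3^(n+2+i))).eval ((x:ℝ):ℂ)‖ ≤ 1 := by
    intro i _
    rw [trin_eval]
    have heq : (-1 : ℂ) + 0 * ((x:ℝ):ℂ)^(3^(n+2+i)) + 1 * (((x:ℝ):ℂ)^(3^(n+2+i)))^2
        = (((x^(3^(n+2+i)))^2 - 1 : ℝ) : ℂ) := by push_cast; ring
    rw [heq, Complex.norm_real, Real.norm_eq_abs, abs_le]
    have h3 : (x^(3^(n+2+i)))^2 ≤ 1 := by
      rw [← pow_mul, mul_comm, pow_mul]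
      exact pow_le_one₀ (sq_nonneg x) hx
    constructor <;> nlinarith [sq_nonneg (x^(3^(n+2+i)))]
  calc c * ‖(trin (-1) 0 1 1).eval ((x:ℝ):ℂ)‖ * ∏ i ∈ Finset.range m, ‖(trin (-1 : ℂ) 0 1 (3^(n+2+i))).eval ((x:ℝ):ℂ)‖
      ≤ c * (1 - x^2) * 1 := by
        rw [h1]
        refine mul_le_mul le_rfl ?_ (Finset.prod_nonneg (fun i _ => norm_nonneg _)) (by nlinarith)
        exact Finset.prod_le_one (fun i _ => norm_nonneg _) h2
    _ = c * (1 - x^2) := by ring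

set_option maxHeartbeats 1000000

theorem stmt_13 (a b : ℝ) (hb : 0 < b) (hba : b ≤ a) (ha : a ≤ 1) :
    ∃ p : Polynomial ℂ, l1 p = 1 ∧
      (⨆ z : Metric.closedBall (0 : ℂ) 1, ‖p.eval (z : ℂ)‖) = a ∧
      (⨆ x : Set.Icc (-1 : ℝ) 1, ‖p.eval ((x : ℝ) : ℂ)‖) = b ∧
      p.eval 1 = (b : ℂ) := by
  have hS : 0 < 1 - a + b := by linarith
  obtain ⟨n', hn'⟩ := pow_unbounded_of_one_lt ((1 - a + b)/b) (show (1:ℝ) < 11/9 by norm_num)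
  set n := n' + 1 with hn
  have hnne : ((n:ℕ):ℝ) ≠ 0 := by positivity
  have hSb : 1 - a + b ≤ (11/9)^n * b := by
    rw [div_lt_iff₀ hb] at hn'
    have h2 : (11/9:ℝ)^n' ≤ (11/9)^n := pow_le_pow_right₀ (by norm_num) (by omega)
    nlinarith
  set v := b ^ ((n:ℝ)⁻¹) with hvdef
  set V := (1 - a + b) ^ ((n:ℝ)⁻¹) with hVdef
  have hv0 : 0 < v := Real.rpow_pos_of_pos hb _
  have hvn : v ^ n = b := by
    rw [hvdef, ← Real.rpow_natCast (b ^ ((n:ℝ)⁻¹)) n, ← Real.rpow_mul hb.le,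
      inv_mul_cancel₀ hnne, Real.rpow_one]
  have hVn : V ^ n = 1 - a + b := by
    rw [hVdef, ← Real.rpow_natCast ((1-a+b) ^ ((n:ℝ)⁻¹)) n, ← Real.rpow_mul hS.le,
      inv_mul_cancel₀ hnne, Real.rpow_one]
  have hvV : v ≤ V := Real.rpow_le_rpow hb.le (by linarith) (by positivity)
  have hV9 : V ≤ (11/9) * v := by
    have h1 : V ≤ ((11/9)^n * b) ^ ((n:ℝ)⁻¹) :=
      Real.rpow_le_rpow hS.le hSb (by positivity)
    have h2 : ((11/9:ℝ)^n * b) ^ ((n:ℝ)⁻¹) = (11/9) * v := by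
      rw [Real.mul_rpow (by positivity) hb.le, ← Real.rpow_natCast (11/9:ℝ) n,
        ← Real.rpow_mul (by norm_num), mul_inv_cancel₀ hnne, Real.rpow_one]
    linarith
  set μ := (V - v)/2 with hμdef
  set t := v - μ with htdef
  have hμ0 : 0 ≤ μ := by rw [hμdef]; linarith
  have h9 : 9*μ ≤ v := by rw [hμdef]; linarith
  have h8 : 8*μ ≤ t := by rw [htdef]; linarith
  have ht0 : 0 < t := by rw [htdef]; linarith
  have htμ : t + μ = v := by rw [htdef]; ring
  have ht3 : t + 3*μ = V := by rw [htdef, hμdef]; ring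
  have hc0 : (0:ℝ) ≤ a - b := by linarith
  have hP0 : (0:ℝ) < t * v^n' := by positivity
  obtain ⟨m₀, hm₀⟩ := pow_unbounded_of_one_lt ((a-b) / (t * v^n')) (show (1:ℝ) < 2 by norm_num)
  set m := 2*m₀ + 1 with hm
  have hmodd : Odd m := by rw [Nat.odd_iff]; omega
  have hcm : a - b ≤ 2^(m+1) * (t * v^n') := by
    rw [div_lt_iff₀ hP0] at hm₀
    have h2 : (2:ℝ)^m₀ ≤ 2^(m+1) := pow_le_pow_right₀ (by norm_num) (by omega)
    nlinarith
  set c'' := (a-b) / 2^(m+1) with hc''def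
  have h2m : (0:ℝ) < 2^(m+1) := by positivity
  have hc''0 : 0 ≤ c'' := by positivity
  have hc''c : c'' * 2^(m+1) = a - b := div_mul_cancel₀ _ (ne_of_gt h2m)
  have hc''P : c'' ≤ t * v^n' := by
    rw [hc''def, div_le_iff₀ h2m]
    nlinarith
  set K := 4*3^n with hK
  set p := pump μ t n + cinner c'' n m * X ^ K with hp
  have hdisj : ∀ k, (pump μ t n).coeff k = 0 ∨ (cinner c'' n m * X ^ K).coeff k = 0 := by
    intro k
    by_cases hk : K ≤ k
    · left
      exact coeff_eq_zero_of_natDegree_lt (by have := pump_natDegree μ t n; omega)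
    · right
      rw [coeff_mul_X_pow', if_neg hk]
  have hIK : Complex.I ^ K = 1 := by
    rw [hK, pow_mul, Complex.I_pow_four, one_pow]
  -- evaluation at I
  have hIeval : p.eval Complex.I = ((a:ℝ):ℂ) := by
    rw [hp, eval_add, eval_mul, eval_pow, eval_X, pump_eval_I, cinner_eval_I c'' n m hmodd,
      hIK, mul_one, ← Complex.ofReal_pow, htμ, hvn]
    push_cast
    rw [show ((c'':ℝ):ℂ) * 2^(m+1) = (((c''*2^(m+1)):ℝ):ℂ) by push_cast; ring, hc''c]
    push_cast
    ring
  -- evaluation at 1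
  have h1eval : p.eval 1 = ((b:ℝ):ℂ) := by
    rw [hp, eval_add, eval_mul, eval_pow, eval_X, pump_eval_one, cinner_eval_one, zero_mul,
      add_zero, ← Complex.ofReal_pow, htμ, hvn]
  -- disc bound
  have hboundD : ∀ z : ℂ, ‖z‖ ≤ 1 → ‖p.eval z‖ ≤ a := by
    intro z hz
    rw [hp, eval_add, eval_mul, eval_pow, eval_X]
    calc ‖(pump μ t n).eval z + (cinner c'' n m).eval z * z ^ K‖
        ≤ ‖(pump μ t n).eval z‖ + ‖(cinner c'' n m).eval z * z ^ K‖ :=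
          norm_add_le _ _
      _ ≤ (t+μ)^n + (c'' * 2^(m+1)) * 1 := by
          refine add_le_add (pump_bound μ t hμ0 h8 n z hz) ?_
          rw [norm_mul]
          refine mul_le_mul (cinner_abs_le c'' hc''0 n m z hz) ?_ (norm_nonneg _)
            (by positivity)
          rw [norm_pow]
          exact pow_le_one₀ (norm_nonneg z) hz
      _ = a := by rw [htμ, hvn, hc''c, mul_one]; ring
  -- real bound
  have hboundR : ∀ x : ℝ, -1 ≤ x → x ≤ 1 → ‖p.eval ((x:ℝ):ℂ)‖ ≤ b := by
    intro x hx1 hx2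
    have hx2' : x^2 ≤ 1 := by nlinarith
    have hxc : ‖((x:ℝ):ℂ)‖ ≤ 1 := by
      rw [Complex.norm_real, Real.norm_eq_abs, abs_le]; exact ⟨hx1, hx2⟩
    rw [hp, eval_add, eval_mul, eval_pow, eval_X]
    have hpump : ‖(pump μ t n).eval ((x:ℝ):ℂ)‖ ≤ (t+μ)^n' * (μ + t*x^4) := by
      rw [pump, eval_prod, norm_prod, hn, Finset.prod_range_succ']
      have hb1 : ∏ j ∈ Finset.range n', ‖
          (trin ((-μ : ℝ) : ℂ) ((t : ℝ) : ℂ) ((2*μ : ℝ) : ℂ) (4*3^(j+1))).eval ((x:ℝ):ℂ)‖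
          ≤ (t+μ)^n' := by
        refine le_trans (Finset.prod_le_prod (g := fun _ => t + μ)
          (fun j _ => norm_nonneg _)
          (fun j _ => trin_abs_le μ t hμ0 h8 _ _ hxc)) ?_
        rw [Finset.prod_const, Finset.card_range]
      have hb2 : ‖
          (trin ((-μ : ℝ) : ℂ) ((t : ℝ) : ℂ) ((2*μ : ℝ) : ℂ) (4*3^0)).eval ((x:ℝ):ℂ)‖
          ≤ μ + t*x^4 := by
        rw [trin_eval]
        have heq : ((-μ : ℝ) : ℂ) + ((t : ℝ):ℂ) * ((x:ℝ):ℂ)^(4*3^0) +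
            ((2*μ : ℝ):ℂ) * (((x:ℝ):ℂ)^(4*3^0))^2 = (((-μ + t*x^4 + 2*μ*x^8) : ℝ) : ℂ) := by
          rw [show 4*3^0 = 4 from rfl]
          push_cast
          ring
        rw [heq, Complex.norm_real, Real.norm_eq_abs, abs_le]
        have hx4 : 0 ≤ x^4 := by positivity
        have hx8 : x^8 ≤ 1 := by
          have h1 : x^8 = (x^2)^4 := by ring
          rw [h1]
          exact pow_le_one₀ (sq_nonneg x) hx2'
        have hx8' : 0 ≤ x^8 := by positivity
        constructor <;> nlinarith
      have hx40 : (0:ℝ) ≤ μ + t*x^4 := by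
        have : (0:ℝ) ≤ x^4 := by positivity
        nlinarith
      calc (∏ j ∈ Finset.range n', ‖
            (trin ((-μ : ℝ) : ℂ) ((t : ℝ) : ℂ) ((2*μ : ℝ) : ℂ) (4*3^(j+1))).eval ((x:ℝ):ℂ)‖) *
            ‖(trin ((-μ : ℝ) : ℂ) ((t : ℝ) : ℂ) ((2*μ : ℝ) : ℂ) (4*3^0)).eval ((x:ℝ):ℂ)‖
          ≤ (t+μ)^n' * (μ + t*x^4) := by
            refine mul_le_mul hb1 hb2 (norm_nonneg _) ?_
            positivity
        _ = (t+μ)^n' * (μ + t*x^4) := by ring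
    have hcp : ‖(cinner c'' n m).eval ((x:ℝ):ℂ) * ((x:ℝ):ℂ) ^ K‖
        ≤ c'' * (1 - x^2) := by
      rw [norm_mul]
      calc ‖(cinner c'' n m).eval ((x:ℝ):ℂ)‖ * ‖((x:ℝ):ℂ) ^ K‖
          ≤ (c'' * (1-x^2)) * 1 := by
            refine mul_le_mul (cinner_real_le c'' hc''0 n m x hx2') ?_ (norm_nonneg _)
              (by nlinarith)
            rw [norm_pow]
            exact pow_le_one₀ (norm_nonneg _) hxc
        _ = c'' * (1-x^2) := by ring
    have hvp : (0:ℝ) < v^n' := by positivity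
    calc ‖(pump μ t n).eval ((x:ℝ):ℂ) + (cinner c'' n m).eval ((x:ℝ):ℂ) * ((x:ℝ):ℂ) ^ K‖
        ≤ ‖(pump μ t n).eval ((x:ℝ):ℂ)‖ +
          ‖(cinner c'' n m).eval ((x:ℝ):ℂ) * ((x:ℝ):ℂ) ^ K‖ := norm_add_le _ _
      _ ≤ (t+μ)^n' * (μ + t*x^4) + c'' * (1 - x^2) := add_le_add hpump hcp
      _ ≤ b := by
          have hq0 : (0:ℝ) ≤ 1 - x^2 := by linarith
          have hq1 : c'' * (1 - x^2) ≤ (t * v^n') * (1 - x^2) :=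
            mul_le_mul_of_nonneg_right hc''P hq0
          have hx4le : x^4 ≤ x^2 := by nlinarith [sq_nonneg x, mul_le_mul_of_nonneg_left hx2' (sq_nonneg x)]
          have hvp' : (0:ℝ) ≤ v^n' := hvp.le
          have hq2 : (0:ℝ) ≤ (t * v^n') * (x^2 - x^4) := by
            refine mul_nonneg (mul_nonneg ht0.le hvp') (by linarith)
          have hw : (t+μ)^n' = v^n' := by rw [htμ]
          have hb' : b = v^n' * (t+μ) := by rw [htμ, ← pow_succ, ← hn, hvn]
          rw [hw, hb']
          nlinarith [hq1, hq2]
  -- nonemptiness and membership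
  have hImem : Complex.I ∈ Metric.closedBall (0:ℂ) 1 := by
    rw [Metric.mem_closedBall, dist_zero_right, Complex.norm_I]
  have h1mem : (1:ℝ) ∈ Set.Icc (-1:ℝ) 1 := by constructor <;> norm_num
  have hne1 : Nonempty (Metric.closedBall (0:ℂ) 1) := ⟨⟨Complex.I, hImem⟩⟩
  have hne2 : Nonempty (Set.Icc (-1:ℝ) 1) := ⟨⟨1, h1mem⟩⟩
  have ha0 : (0:ℝ) ≤ a := by linarith
  refine ⟨p, ?_, ?_, ?_, ?_⟩
  · -- l1
    rw [hp, l1_add_disj hdisj, pump_l1 μ t hμ0 ht0.le, l1_mul_X_pow, cinner_l1 c'' hc''0,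
      ht3, hVn, hc''c]
    ring
  · -- disc sup
    apply le_antisymm
    · refine ciSup_le ?_
      rintro ⟨z, hz⟩
      refine hboundD z ?_
      rw [Metric.mem_closedBall, dist_zero_right] at hz
      exact hz
    · have hbdd : BddAbove (Set.range (fun z : Metric.closedBall (0:ℂ) 1 =>
          ‖p.eval (z : ℂ)‖)) := by
        refine ⟨a, ?_⟩
        rintro r ⟨⟨z, hz⟩, rfl⟩
        refine hboundD z ?_
        rw [Metric.mem_closedBall, dist_zero_right] at hz
        exact hz
      have := le_ciSup hbdd (⟨Complex.I, hImem⟩ : Metric.closedBall (0:ℂ) 1)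
      simp only at this
      rw [hIeval] at this
      rw [Complex.norm_real, Real.norm_eq_abs, abs_of_nonneg ha0] at this
      exact this
  · -- real sup
    apply le_antisymm
    · refine ciSup_le ?_
      rintro ⟨x, hx⟩
      exact hboundR x hx.1 hx.2
    · have hbdd : BddAbove (Set.range (fun x : Set.Icc (-1:ℝ) 1 =>
          ‖p.eval ((x:ℝ):ℂ)‖)) := by
        refine ⟨b, ?_⟩
        rintro r ⟨⟨x, hx⟩, rfl⟩
        exact hboundR x hx.1 hx.2
      have := le_ciSup hbdd (⟨1, h1mem⟩ : Set.Icc (-1:ℝ) 1)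
      simp only [Complex.ofReal_one] at this
      rw [h1eval] at this
      rw [Complex.norm_real, Real.norm_eq_abs, abs_of_nonneg hb.le] at this
      exact this
  · rw [h1eval]
end

section
/- Fix $0 < b \le 1$ with $b^{1/k} > \frac{-5+4\sqrt{2}}{7}$ for some positive integer $k$, and suppose $p$ is a polynomial with $|p|_1 = 1$, $p(1) = b^{1/k}$, $\sup_{x\in[-1,1]}|p(x)| \le b^{1/k}$. Define $w_{l+1}(z) = w_l(z) \cdot p(z^{4\deg w_l + 1})$ with $w_0 = p$, and $w := w_{k-1}$. Then $|w|_1 = 1$, $w(1) = b$, and $\sup_{x\in[-1,1]} |w(x)| \le b$. -/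
open Polynomial

lemma l1_eq_sum_range (f : ℂ[X]) {N : ℕ} (h : f.natDegree < N) :
    l1 f = ∑ n ∈ Finset.range N, ‖f.coeff n‖ := by
  rw [l1]
  refine Finset.sum_subset (supp_subset_range h) ?_
  intro x _ hx
  simp [Polynomial.notMem_support_iff.mp hx]

lemma coeff_mul_expand (f p : ℂ[X]) {m : ℕ} (hm : f.natDegree < m) (n : ℕ) :
    (f * expand ℂ m p).coeff n = f.coeff (n % m) * p.coeff (n / m) := by
  have hm0 : 0 < m := lt_of_le_of_lt (Nat.zero_le _) hm
  rw [Polynomial.coeff_mul]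
  rw [Finset.sum_eq_single (n % m, m * (n / m))]
  · rw [coeff_expand_mul' hm0]
  · intro q hq hne
    by_contra hc
    apply hne
    have hf : f.coeff q.1 ≠ 0 := fun h => hc (by simp [h])
    have hg : (expand ℂ m p).coeff q.2 ≠ 0 := fun h => hc (by simp [h])
    rw [coeff_expand hm0] at hg
    have hdvd : m ∣ q.2 := by
      by_contra h; simp [h] at hg
    have h1 : q.1 < m := lt_of_le_of_lt (le_natDegree_of_ne_zero hf) hm
    have hsum : q.1 + q.2 = n := Finset.HasAntidiagonal.mem_antidiagonal.mp hq
    obtain ⟨t, ht⟩ := hdvd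
    rw [ht] at hsum
    have hmod : n % m = q.1 := by
      rw [← hsum, Nat.add_mul_mod_self_left, Nat.mod_eq_of_lt h1]
    have hdiv : n / m = t := by
      rw [← hsum, Nat.add_mul_div_left _ _ hm0, Nat.div_eq_of_lt h1, zero_add]
    refine Prod.ext hmod.symm ?_
    show q.2 = m * (n / m)
    rw [hdiv, ht]
  · intro habs
    exact absurd (Finset.HasAntidiagonal.mem_antidiagonal.mpr (Nat.mod_add_div n m)) habs

lemma l1_mul_expand (f p : ℂ[X]) {m : ℕ} (hm : f.natDegree < m) :
    l1 (f * expand ℂ m p) = l1 f * l1 p := by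
  have hm0 : 0 < m := lt_of_le_of_lt (Nat.zero_le _) hm
  set P := p.natDegree with hP
  have hdeg : (f * expand ℂ m p).natDegree < m * (P + 1) := by
    calc (f * expand ℂ m p).natDegree ≤ f.natDegree + (expand ℂ m p).natDegree :=
          natDegree_mul_le
      _ = f.natDegree + P * m := by rw [natDegree_expand]
      _ < m * (P + 1) := by nlinarith [hm]
  rw [l1_eq_sum_range _ hdeg, l1_eq_sum_range f hm, l1_eq_sum_range p (Nat.lt_succ_self P),
    Finset.sum_mul_sum]
  rw [← Finset.sum_product']
  refine Finset.sum_bij' (fun n _ => (n % m, n / m)) (fun q _ => q.1 + m * q.2) ?_ ?_ ?_ ?_ ?_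
  · intro n hn
    rw [Finset.mem_range] at hn
    refine Finset.mem_product.mpr ⟨Finset.mem_range.mpr (Nat.mod_lt _ hm0),
      Finset.mem_range.mpr ?_⟩
    exact Nat.div_lt_of_lt_mul hn
  · intro q hq
    rw [Finset.mem_product, Finset.mem_range, Finset.mem_range] at hq
    rw [Finset.mem_range]
    show q.1 + m * q.2 < m * (P + 1)
    have h2 : m * q.2 ≤ m * P := Nat.mul_le_mul_left m (Nat.lt_succ_iff.mp hq.2)
    have h3 : m * (P + 1) = m + m * P := by ring
    have := hq.1
    omega
  · intro n _
    exact Nat.mod_add_div n m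
  · intro q hq
    rw [Finset.mem_product, Finset.mem_range, Finset.mem_range] at hq
    have h1 := hq.1
    ext
    · simp [Nat.add_mul_mod_self_left, Nat.mod_eq_of_lt h1]
    · simp [Nat.add_mul_div_left _ _ hm0, Nat.div_eq_of_lt h1]
  · intro n _
    rw [coeff_mul_expand f p hm, norm_mul]

theorem stmt_19 (b : ℝ) (hb : 0 < b) (hb1 : b ≤ 1) (k : ℕ) (hk : 0 < k)
    (hb0 : b ^ ((1 : ℝ) / k) > (-5 + 4 * Real.sqrt 2) / 7)
    (p : Polynomial ℂ) (hp : l1 p = 1)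
    (hp1 : p.eval 1 = ((b ^ ((1 : ℝ) / k) : ℝ) : ℂ))
    (hpint : ∀ x ∈ Set.Icc (-1 : ℝ) 1,
      ‖p.eval ((x : ℝ) : ℂ)‖ ≤ b ^ ((1 : ℝ) / k))
    (w : ℕ → Polynomial ℂ) (h0 : w 0 = p)
    (hrec : ∀ l, w (l + 1) = w l * p.comp (X ^ (4 * (w l).natDegree + 1))) :
    l1 (w (k - 1)) = 1 ∧ (w (k - 1)).eval 1 = (b : ℂ) ∧
      ∀ x ∈ Set.Icc (-1 : ℝ) 1, ‖(w (k - 1)).eval ((x : ℝ) : ℂ)‖ ≤ b := by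
  set c : ℝ := b ^ ((1 : ℝ) / k) with hc
  have hc0 : 0 ≤ c := Real.rpow_nonneg hb.le _
  have hc1 : c ≤ 1 := Real.rpow_le_one hb.le hb1 (by positivity)
  have key : ∀ l, l1 (w l) = 1 ∧ (w l).eval 1 = ((c ^ (l + 1) : ℝ) : ℂ) ∧
      ∀ x ∈ Set.Icc (-1 : ℝ) 1, ‖(w l).eval ((x : ℝ) : ℂ)‖ ≤ c ^ (l + 1) := by
    intro l
    induction l with
    | zero =>
      refine ⟨by rw [h0, hp], by rw [h0]; simpa using hp1, ?_⟩
      intro x hx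
      rw [h0]
      simpa using hpint x hx
    | succ l ih =>
      obtain ⟨ih1, ih2, ih3⟩ := ih
      set m := 4 * (w l).natDegree + 1 with hmdef
      have hm : (w l).natDegree < m := by omega
      have hw : w (l + 1) = w l * expand ℂ m p := by
        rw [hrec l, ← expand_eq_comp_X_pow]
      refine ⟨?_, ?_, ?_⟩
      · rw [hw, l1_mul_expand _ _ hm, ih1, hp, one_mul]
      · rw [hw, eval_mul, ih2, expand_eval, one_pow, hp1]
        push_cast
        ring
      · intro x hx
        rw [hw, eval_mul, norm_mul]
        have hx1 : |x| ≤ 1 := abs_le.mpr hx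
        have hx' : x ^ m ∈ Set.Icc (-1 : ℝ) 1 := by
          rw [Set.mem_Icc, ← abs_le, abs_pow]
          exact pow_le_one₀ (abs_nonneg x) hx1
        have h2 : ‖(expand ℂ m p).eval ((x : ℝ) : ℂ)‖ ≤ c := by
          rw [expand_eval]
          have hcast : ((x : ℝ) : ℂ) ^ m = (((x ^ m : ℝ) : ℝ) : ℂ) := by push_cast; ring
          rw [hcast]
          exact hpint _ hx'
        calc ‖(w l).eval ((x : ℝ) : ℂ)‖ * ‖(expand ℂ m p).eval ((x : ℝ) : ℂ)‖
            ≤ c ^ (l + 1) * c :=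
              mul_le_mul (ih3 x hx) h2 (norm_nonneg _) (pow_nonneg hc0 _)
          _ = c ^ (l + 1 + 1) := by ring
  obtain ⟨h1, h2, h3⟩ := key (k - 1)
  have hkk : k - 1 + 1 = k := Nat.succ_pred_eq_of_pos hk
  have hck : c ^ k = b := by
    rw [hc, ← Real.rpow_natCast (b ^ ((1 : ℝ) / k)) k, ← Real.rpow_mul hb.le,
      one_div_mul_cancel (by exact_mod_cast hk.ne' : (k : ℝ) ≠ 0), Real.rpow_one]
  rw [hkk] at h2 h3
  refine ⟨h1, ?_, ?_⟩
  · rw [h2, hck]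
  · intro x hx
    have := h3 x hx
    rwa [hck] at this
end
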